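/- Let S ⊆ {1,…,p} be nonempty and let θ*_S ∈ ℝ^{|S|} satisfy the score equation ∑_{i=1}^n (b'(x_iᵀθ₀) − b'(x_{i,S}ᵀθ*_S))·x_{i,S} = 0, and suppose F = ∑_{i=1}^n b''(x_{i,S}ᵀθ*_S)·x_{i,S}x_{i,S}ᵀ is positive definite. Put V = ∑_{i=1}^n σ_i²·x_{i,S}x_{i,S}ᵀ and assume λ_max(F^{−1/2} V F^{−1/2}) ≤ C_mis for a constant C_mis > 0. Let ζ = max_{1≤i≤n} ‖F^{−1/2}x_{i,S}‖₂, σ_max = max_{1≤i≤n} σ_i, and ξ = F^{−1/2}∑_{i=1}^n ε_i·x_{i,S}. Then for every u ∈ ℝ^{|S|} with ‖u‖₂ ≤ t₀/(ζ·σ_max), one has log E[exp(uᵀξ)] ≤ (ν₀²·C_mis/2)·‖u‖₂². -/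

import Mathlib

open MeasureTheory ProbabilityTheory Matrix Real

/-- Largest eigenvalue of a symmetric real matrix, as the supremum of the Rayleigh quotient
over unit vectors. -/
noncomputable def lamMax {m : Type*} [Fintype m] (A : Matrix m m ℝ) : ℝ :=
  sSup {r : ℝ | ∃ u : m → ℝ, (∑ i, u i ^ 2) = 1 ∧ r = u ⬝ᵥ A.mulVec u}

-- Rayleigh bound
lemma rayleigh_le {m : Type*} [Fintype m] [Nonempty m] (A : Matrix m m ℝ) (u : m → ℝ) :
    u ⬝ᵥ A.mulVec u ≤ lamMax A * ∑ i, u i ^ 2 := by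
  have hbdd : BddAbove {r : ℝ | ∃ u : m → ℝ, (∑ i, u i ^ 2) = 1 ∧ r = u ⬝ᵥ A.mulVec u} := by
    refine ⟨∑ i, ∑ j, |A i j|, ?_⟩
    rintro r ⟨v, hv, rfl⟩
    have hv1 : ∀ i, |v i| ≤ 1 := by
      intro i
      have h1 : v i ^ 2 ≤ 1 := hv ▸ Finset.single_le_sum (fun j _ => sq_nonneg (v j)) (Finset.mem_univ i)
      nlinarith [abs_nonneg (v i), sq_abs (v i)]
    calc v ⬝ᵥ A.mulVec v ≤ |v ⬝ᵥ A.mulVec v| := le_abs_self _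
      _ ≤ ∑ i, |v i * ∑ j, A i j * v j| := by
          simp only [dotProduct, mulVec]
          exact Finset.abs_sum_le_sum_abs _ _
      _ ≤ ∑ i, ∑ j, |A i j| := by
          refine Finset.sum_le_sum fun i _ => ?_
          rw [abs_mul]
          calc |v i| * |∑ j, A i j * v j| ≤ 1 * ∑ j, |A i j * v j| := by
                refine mul_le_mul (hv1 i) (Finset.abs_sum_le_sum_abs _ _) (abs_nonneg _) zero_le_one
            _ = ∑ j, |A i j| * |v j| := by rw [one_mul]; exact Finset.sum_congr rfl fun j _ => abs_mul _ _
            _ ≤ ∑ j, |A i j| * 1 := Finset.sum_le_sum fun j _ => mul_le_mul_of_nonneg_left (hv1 j) (abs_nonneg _)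
            _ = ∑ j, |A i j| := by simp
  by_cases hu : ∑ i, u i ^ 2 = 0
  · have hu0 : ∀ i, u i = 0 := by
      intro i
      have := (Finset.sum_eq_zero_iff_of_nonneg (fun j _ => sq_nonneg (u j))).1 hu i (Finset.mem_univ i)
      exact pow_eq_zero_iff (n := 2) (by norm_num) |>.1 this
    have : u = 0 := funext hu0
    simp [this, hu]
  · have hpos : 0 < ∑ i, u i ^ 2 :=
      lt_of_le_of_ne (Finset.sum_nonneg fun j _ => sq_nonneg (u j)) (Ne.symm hu)
    set s := Real.sqrt (∑ i, u i ^ 2) with hs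
    have hspos : 0 < s := Real.sqrt_pos.2 hpos
    have hs2 : s ^ 2 = ∑ i, u i ^ 2 := Real.sq_sqrt hpos.le
    set v : m → ℝ := fun i => u i / s with hvdef
    have hvmem : (∑ i, v i ^ 2) = 1 := by
      simp only [hvdef, div_pow]
      rw [← Finset.sum_div, ← hs2]
      field_simp
    have hval : v ⬝ᵥ A.mulVec v = (u ⬝ᵥ A.mulVec u) / s ^ 2 := by
      simp only [hvdef, dotProduct, mulVec]
      rw [Finset.sum_div]
      refine Finset.sum_congr rfl fun i _ => ?_
      rw [Finset.mul_sum, Finset.mul_sum, Finset.sum_div]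
      refine Finset.sum_congr rfl fun j _ => ?_
      rw [sq]
      field_simp
    have hle : v ⬝ᵥ A.mulVec v ≤ lamMax A := le_csSup hbdd ⟨v, hvmem, rfl⟩
    rw [hval] at hle
    calc u ⬝ᵥ A.mulVec u = (u ⬝ᵥ A.mulVec u) / s ^ 2 * (∑ i, u i ^ 2) := by
          rw [hs2]; field_simp
      _ ≤ lamMax A * ∑ i, u i ^ 2 := mul_le_mul_of_nonneg_right hle hpos.le

lemma mul_div_cancel_aux (s t e : ℝ) (hs : s ≠ 0) : (s * t) * (e / s) = t * e := by
  field_simp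

-- Cauchy-Schwarz helper
lemma abs_dot_le {m : Type*} [Fintype m] (f g : m → ℝ) :
    |∑ i, f i * g i| ≤ Real.sqrt (∑ i, f i ^ 2) * Real.sqrt (∑ i, g i ^ 2) := by
  have h := Finset.sum_mul_sq_le_sq_mul_sq Finset.univ f g
  calc |∑ i, f i * g i| = Real.sqrt ((∑ i, f i * g i) ^ 2) := (Real.sqrt_sq_eq_abs _).symm
    _ ≤ Real.sqrt ((∑ i, f i ^ 2) * ∑ i, g i ^ 2) := Real.sqrt_le_sqrt h
    _ = _ := Real.sqrt_mul (Finset.sum_nonneg fun i _ => sq_nonneg _) _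

/-- exponential moment of the normalized score function under a
sub-exponential tail assumption. Here `R` plays the role of `F^{-1/2}`: it is the unique
positive semidefinite matrix with `R * F * R = 1`. -/
theorem stmt_2
    {Ω : Type*} [MeasurableSpace Ω] (μ : Measure Ω) [IsProbabilityMeasure μ]
    (n p : ℕ) (hn : 1 ≤ n)
    (x : Fin n → Fin p → ℝ) (θ₀ : Fin p → ℝ)
    -- the cumulant function
    (b : ℝ → ℝ) (hb2 : ContDiff ℝ 2 b) (hbconv : StrictConvexOn ℝ Set.univ b)
    -- the responses: independent, mean `b'(x_iᵀθ₀)`, variance proxy `σ_i² = b''(x_iᵀθ₀) > 0`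
    (Y : Fin n → Ω → ℝ) (hYmeas : ∀ i, Measurable (Y i))
    (hYindep : iIndepFun Y μ)
    (hmean : ∀ i : Fin n, ∫ ω, Y i ω ∂μ = deriv b (∑ j, x i j * θ₀ j))
    (hσpos : ∀ i : Fin n, 0 < deriv (deriv b) (∑ j, x i j * θ₀ j))
    -- the sub-exponential assumption on the standardized errors
    (ν₀ t₀ : ℝ) (hν₀ : 0 < ν₀) (ht₀ : 0 < t₀)
    (hsubexp : ∀ i : Fin n, ∀ t : ℝ, |t| ≤ t₀ →
      Real.log (∫ ω, Real.exp (t * ((Y i ω - deriv b (∑ j, x i j * θ₀ j)) /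
          Real.sqrt (deriv (deriv b) (∑ j, x i j * θ₀ j)))) ∂μ)
        ≤ ν₀ ^ 2 * t ^ 2 / 2)
    -- the model `S`, the best coefficient `θs = θ*_S` solving the score equation
    (S : Finset (Fin p)) (hS : S.Nonempty)
    (θs : S → ℝ)
    (hscore : ∀ k : S, ∑ i,
        (deriv b (∑ j, x i j * θ₀ j) - deriv b (∑ j : S, x i j.1 * θs j)) * x i k.1 = 0)
    -- the Fisher matrix `F` and the matrix `V`
    (F V : Matrix S S ℝ)
    (hF : ∀ j k : S, F j k = ∑ i, deriv (deriv b) (∑ l : S, x i l.1 * θs l) * x i j.1 * x i k.1)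
    (hV : ∀ j k : S, V j k = ∑ i, deriv (deriv b) (∑ l, x i l * θ₀ l) * x i j.1 * x i k.1)
    (hFpd : F.PosDef)
    -- `R = F^{-1/2}`
    (R : Matrix S S ℝ) (hRpsd : R.PosSemidef) (hR : R * F * R = 1)
    -- misspecification bound, `ζ = max_i ‖F^{-1/2} x_{i,S}‖₂`, `σ_max = max_i σ_i`
    (Cmis ζ σmax : ℝ) (hCmis : 0 < Cmis)
    (hmis : lamMax (R * V * R) ≤ Cmis)
    (hζ : ζ = ⨆ i : Fin n, Real.sqrt (∑ j : S, (R.mulVec (fun l : S => x i l.1) j) ^ 2))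
    (hσmax : σmax = ⨆ i : Fin n, Real.sqrt (deriv (deriv b) (∑ j, x i j * θ₀ j))) :
    ∀ u : S → ℝ, Real.sqrt (∑ j, u j ^ 2) ≤ t₀ / (ζ * σmax) →
      Real.log (∫ ω, Real.exp (∑ j : S, u j * R.mulVec
          (fun k : S => ∑ i, (Y i ω - deriv b (∑ l, x i l * θ₀ l)) * x i k.1) j) ∂μ)
        ≤ ν₀ ^ 2 * Cmis / 2 * (∑ j, u j ^ 2) := by
  
  intro u hu
  have hSne : Nonempty S := hS.to_subtype
  have hnne : Nonempty (Fin n) := ⟨⟨0, hn⟩⟩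
  set c : Fin n → ℝ := fun i => deriv (deriv b) (∑ j, x i j * θ₀ j) with hc
  set mm : Fin n → ℝ := fun i => deriv b (∑ j, x i j * θ₀ j) with hmm
  set σ : Fin n → ℝ := fun i => Real.sqrt (c i) with hσ
  have hσ0 : ∀ i, 0 < σ i := fun i => Real.sqrt_pos.2 (hσpos i)
  set xS : Fin n → S → ℝ := fun i (l : S) => x i l.1 with hxS
  set a : Fin n → ℝ := fun i => ∑ j : S, u j * R.mulVec (xS i) j with ha
  set Z : Fin n → Ω → ℝ := fun i ω => a i * (Y i ω - mm i) with hZ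
  -- rewriting the integrand
  have hinteq : ∀ ω, (∑ j : S, u j * R.mulVec
      (fun k : S => ∑ i, (Y i ω - mm i) * x i k.1) j) = ∑ i, Z i ω := by
    intro ω
    have e1 : ∀ j : S, u j * R.mulVec (fun k : S => ∑ i, (Y i ω - mm i) * x i k.1) j
        = ∑ i, (Y i ω - mm i) * (u j * ∑ k : S, R j k * x i k.1) := by
      intro j
      calc u j * R.mulVec (fun k : S => ∑ i, (Y i ω - mm i) * x i k.1) j
          = ∑ k : S, ∑ i, u j * (R j k * ((Y i ω - mm i) * x i k.1)) := by
            simp only [Matrix.mulVec, dotProduct, Finset.mul_sum]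
        _ = ∑ i, ∑ k : S, u j * (R j k * ((Y i ω - mm i) * x i k.1)) := Finset.sum_comm
        _ = ∑ i, (Y i ω - mm i) * (u j * ∑ k : S, R j k * x i k.1) := by
            refine Finset.sum_congr rfl fun i _ => ?_
            simp only [Finset.mul_sum]
            refine Finset.sum_congr rfl fun k _ => ?_
            ring
    calc (∑ j : S, u j * R.mulVec (fun k : S => ∑ i, (Y i ω - mm i) * x i k.1) j)
        = ∑ j : S, ∑ i, (Y i ω - mm i) * (u j * ∑ k : S, R j k * x i k.1) :=
          Finset.sum_congr rfl fun j _ => e1 j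
      _ = ∑ i, ∑ j : S, (Y i ω - mm i) * (u j * ∑ k : S, R j k * x i k.1) := Finset.sum_comm
      _ = ∑ i, Z i ω := by
          refine Finset.sum_congr rfl fun i _ => ?_
          rw [← Finset.mul_sum, hZ]
          dsimp only
          rw [mul_comm]
          congr 1
  -- measurability and independence
  have hZmeas : ∀ i, Measurable (Z i) := fun i => ((hYmeas i).sub_const _).const_mul _
  have hZindep : iIndepFun Z μ := by
    have := hYindep.comp (fun i (v : ℝ) => a i * (v - mm i))
      (fun i => (measurable_id.sub_const _).const_mul _)
    exact this
  have hmgfsum : mgf (∑ i, Z i) μ 1 = ∏ i, mgf (Z i) μ 1 :=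
    hZindep.mgf_sum hZmeas Finset.univ
  have hLHS : (∫ ω, Real.exp (∑ j : S, u j * R.mulVec
      (fun k : S => ∑ i, (Y i ω - mm i) * x i k.1) j) ∂μ) = ∏ i, mgf (Z i) μ 1 := by
    rw [← hmgfsum, mgf]
    refine integral_congr_ae (Filter.Eventually.of_forall fun ω => ?_)
    dsimp only
    rw [hinteq ω, one_mul, Finset.sum_apply]
  -- bounds on the coefficients
  have hζ0 : 0 ≤ ζ := by
    rw [hζ]
    exact le_ciSup_of_le (Set.Finite.bddAbove (Set.finite_range _)) (Classical.arbitrary _)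
      (Real.sqrt_nonneg _)
  have hσle : ∀ i, σ i ≤ σmax := by
    intro i
    rw [hσmax]
    exact le_ciSup (Set.Finite.bddAbove (Set.finite_range _)) i
  have hζle : ∀ i, Real.sqrt (∑ j : S, (R.mulVec (xS i) j) ^ 2) ≤ ζ := by
    intro i
    rw [hζ]
    exact le_ciSup (f := fun i : Fin n => Real.sqrt (∑ j : S, (R.mulVec (fun l : S => x i l.1) j) ^ 2))
      (Set.Finite.bddAbove (Set.finite_range _)) i
  have hσmax0 : 0 < σmax := lt_of_lt_of_le (hσ0 ⟨0, hn⟩) (hσle ⟨0, hn⟩)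
  have hale : ∀ i, |a i| ≤ Real.sqrt (∑ j, u j ^ 2) * ζ := by
    intro i
    calc |a i| ≤ Real.sqrt (∑ j, u j ^ 2) * Real.sqrt (∑ j : S, (R.mulVec (xS i) j) ^ 2) :=
          abs_dot_le u (R.mulVec (xS i))
      _ ≤ Real.sqrt (∑ j, u j ^ 2) * ζ :=
          mul_le_mul_of_nonneg_left (hζle i) (Real.sqrt_nonneg _)
  have ht : ∀ i, |σ i * a i| ≤ t₀ := by
    intro i
    by_cases hζz : ζ = 0
    · have hu0 : Real.sqrt (∑ j, u j ^ 2) = 0 := by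
        have : t₀ / (ζ * σmax) = 0 := by rw [hζz, zero_mul, div_zero]
        exact le_antisymm (this ▸ hu) (Real.sqrt_nonneg _)
      have h' := hale i
      rw [hu0, zero_mul] at h'
      have ha0 : a i = 0 := abs_nonpos_iff.mp h'
      simp [ha0, ht₀.le]
    · have hζpos : 0 < ζ := lt_of_le_of_ne hζ0 (Ne.symm hζz)
      have hnorm_le : Real.sqrt (∑ j, u j ^ 2) * (ζ * σmax) ≤ t₀ := by
        rw [← le_div_iff₀ (by positivity)]
        exact hu
      calc |σ i * a i| = σ i * |a i| := by
            rw [abs_mul, abs_of_pos (hσ0 i)]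
        _ ≤ σmax * (Real.sqrt (∑ j, u j ^ 2) * ζ) := by
            apply mul_le_mul (hσle i) (hale i) (abs_nonneg _) hσmax0.le
        _ = Real.sqrt (∑ j, u j ^ 2) * (ζ * σmax) := by ring
        _ ≤ t₀ := hnorm_le
  -- per-term log bound
  have hlog : ∀ i, Real.log (mgf (Z i) μ 1) ≤ ν₀ ^ 2 * (σ i * a i) ^ 2 / 2 := by
    intro i
    have h := hsubexp i (σ i * a i) (ht i)
    have heq : (∫ ω, Real.exp ((σ i * a i) * ((Y i ω - mm i) / σ i)) ∂μ) = mgf (Z i) μ 1 := by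
      rw [mgf]
      refine integral_congr_ae (Filter.Eventually.of_forall fun ω => ?_)
      dsimp only
      rw [one_mul]
      congr 1
      rw [hZ]
      exact mul_div_cancel_aux _ _ _ (hσ0 i).ne'
    rw [heq] at h
    exact h
  -- the quadratic form identity
  have hRt : Rᵀ = R := by
    have h1 := hRpsd.1
    rw [Matrix.IsHermitian] at h1
    simpa using h1
  have hdotR : ∀ v : S → ℝ, u ⬝ᵥ R.mulVec v = (R.mulVec u) ⬝ᵥ v := by
    intro v
    rw [Matrix.dotProduct_mulVec, ← Matrix.mulVec_transpose, hRt]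
  set w : S → ℝ := R.mulVec u with hw
  have haw : ∀ i, a i = w ⬝ᵥ xS i := fun i => hdotR (xS i)
  have hquad : ∑ i, c i * a i ^ 2 = u ⬝ᵥ (R * V * R).mulVec u := by
    have h1 : (R * V * R).mulVec u = R.mulVec (V.mulVec w) := by
      rw [hw, Matrix.mulVec_mulVec, Matrix.mulVec_mulVec]
    rw [h1, hdotR]
    calc ∑ i, c i * a i ^ 2 = ∑ i, ∑ j : S, ∑ k : S, w j * (c i * x i j.1 * x i k.1) * w k := by
          refine Finset.sum_congr rfl fun i _ => ?_
          rw [haw i, dotProduct, sq, Finset.sum_mul_sum]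
          rw [Finset.mul_sum]
          refine Finset.sum_congr rfl fun j _ => ?_
          rw [Finset.mul_sum]
          refine Finset.sum_congr rfl fun k _ => ?_
          simp only [hxS]
          ring
      _ = ∑ j : S, ∑ k : S, ∑ i, w j * (c i * x i j.1 * x i k.1) * w k := by
          rw [Finset.sum_comm]
          refine Finset.sum_congr rfl fun j _ => ?_
          rw [Finset.sum_comm]
      _ = w ⬝ᵥ V.mulVec w := by
          simp only [dotProduct, Matrix.mulVec, hV]
          refine Finset.sum_congr rfl fun j _ => ?_
          rw [Finset.mul_sum]
          refine Finset.sum_congr rfl fun k _ => ?_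
          rw [Finset.sum_mul, Finset.mul_sum]
          refine Finset.sum_congr rfl fun i _ => ?_
          ring
  have hquadle : ∑ i, c i * a i ^ 2 ≤ Cmis * ∑ j, u j ^ 2 := by
    rw [hquad]
    calc u ⬝ᵥ (R * V * R).mulVec u ≤ lamMax (R * V * R) * ∑ j, u j ^ 2 := rayleigh_le _ u
      _ ≤ Cmis * ∑ j, u j ^ 2 :=
          mul_le_mul_of_nonneg_right hmis (Finset.sum_nonneg fun j _ => sq_nonneg _)
  -- conclude
  rw [hLHS]
  by_cases hzero : ∃ i, mgf (Z i) μ 1 = 0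
  · obtain ⟨i, hi⟩ := hzero
    rw [Finset.prod_eq_zero (Finset.mem_univ i) hi, Real.log_zero]
    positivity
  · push_neg at hzero
    rw [Real.log_prod fun i _ => hzero i]
    calc ∑ i, Real.log (mgf (Z i) μ 1) ≤ ∑ i, ν₀ ^ 2 * (σ i * a i) ^ 2 / 2 :=
          Finset.sum_le_sum fun i _ => hlog i
      _ = ν₀ ^ 2 / 2 * ∑ i, c i * a i ^ 2 := by
          rw [Finset.mul_sum]
          refine Finset.sum_congr rfl fun i _ => ?_
          have : σ i ^ 2 = c i := Real.sq_sqrt (hσpos i).le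
          rw [mul_pow, this]
          ring
      _ ≤ ν₀ ^ 2 / 2 * (Cmis * ∑ j, u j ^ 2) :=
          mul_le_mul_of_nonneg_left hquadle (by positivity)
      _ = ν₀ ^ 2 * Cmis / 2 * (∑ j, u j ^ 2) := by ring
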